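/- Under assumption (H), let (η_p)_{p≥0} be an arbitrary sequence of probability measures on X and define λ_p, Q_{p+1}, Q_{0,n}, h_{0,n} and η_n as in the context. Then for every probability measure μ' on X, every bounded measurable φ, and every n ≥ 1: (i) |(∏_{p=0}^{n−1} λ_p)^{−1} μ'Q_{0,n}(φ) − μ'(h_{0,n})·η_n(φ)| ≤ 2‖φ‖ ρ̃^n (ε⁺/ε⁻); and (ii) |μ'Q_{0,n}(φ)/μ'Q_{0,n}(1) − η_n(φ)| ≤ 2‖φ‖ ρ̃^n (ε⁺/ε⁻)², where ρ̃ := 1 − (ε⁻/ε⁺)². These bounds are uniform in μ' and in the sequence (η_p). -/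

import Mathlib

set_option linter.unusedSectionVars false

open MeasureTheory ProbabilityTheory Filter
open scoped ENNReal

/-- The operator `Q(φ)(x) = G(x) ∫ φ(y) M(x,dy)` associated with the kernel
`Q(x,dy) := G(x) M(x,dy)`. -/
noncomputable def Qop {X : Type*} [MeasurableSpace X] (G : X → ℝ) (M : Kernel X X)
    (φ : X → ℝ) (x : X) : ℝ :=
  G x * ∫ y, φ y ∂(M x)

/-- The `n`-fold iterate `Q^{(n)}` of the operator `Q`, `Q^{(0)} = Id`. -/
noncomputable def Qiter {X : Type*} [MeasurableSpace X] (G : X → ℝ) (M : Kernel X X) :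
    ℕ → (X → ℝ) → X → ℝ
  | 0 => fun φ => φ
  | n + 1 => fun φ => Qop G M (Qiter G M n φ)

noncomputable def QNop {X : Type*} [MeasurableSpace X] (G : X → ℝ) (q : X → X → ℝ)
    (η : ℕ → Measure X) (p : ℕ) (φ : X → ℝ) (x : X) : ℝ :=
  ∫ x', (∫ y, G y ∂(η p)) * q x x' / (∫ y, q y x' ∂(η p)) * φ x' ∂(η (p + 1))

noncomputable def QNgap {X : Type*} [MeasurableSpace X] (G : X → ℝ) (q : X → X → ℝ)
    (η : ℕ → Measure X) : ℕ → ℕ → (X → ℝ) → X → ℝ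
  | _, 0 => fun φ => φ
  | p, k + 1 => fun φ => QNop G q η p (QNgap G q η (p + 1) k φ)

section Aux

variable {X : Type*} [MeasurableSpace X]

lemma intble {μ : Measure X} [IsFiniteMeasure μ] {f : X → ℝ} (hf : Measurable f)
    {C : ℝ} (hC : ∀ x, |f x| ≤ C) : Integrable f μ :=
  (integrable_const C).mono' hf.aestronglyMeasurable (Filter.Eventually.of_forall hC)

lemma intble2 {μ : Measure X} [IsFiniteMeasure μ] {f : X → ℝ} (hf : Measurable f)
    {lo hi : ℝ} (h1 : ∀ x, lo ≤ f x) (h2 : ∀ x, f x ≤ hi) : Integrable f μ :=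
  intble hf (C := max (-lo) hi) fun x => abs_le.2
    ⟨by have := le_max_left (-lo) hi; linarith [h1 x], le_trans (h2 x) (le_max_right _ _)⟩

lemma integral_const_prob {μ : Measure X} [IsProbabilityMeasure μ] (c : ℝ) :
    ∫ _, c ∂μ = c := by simp

lemma integral_le_const {μ : Measure X} [IsProbabilityMeasure μ] {f : X → ℝ} {lo hi : ℝ}
    (hf : Measurable f) (h1 : ∀ x, lo ≤ f x) (h2 : ∀ x, f x ≤ hi) :
    ∫ x, f x ∂μ ≤ hi := by
  calc ∫ x, f x ∂μ ≤ ∫ _, hi ∂μ := integral_mono (intble2 hf h1 h2) (integrable_const _) h2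
  _ = hi := integral_const_prob _

lemma const_le_integral {μ : Measure X} [IsProbabilityMeasure μ] {f : X → ℝ} {lo hi : ℝ}
    (hf : Measurable f) (h1 : ∀ x, lo ≤ f x) (h2 : ∀ x, f x ≤ hi) :
    lo ≤ ∫ x, f x ∂μ := by
  calc lo = ∫ _, lo ∂μ := (integral_const_prob _).symm
  _ ≤ ∫ x, f x ∂μ := integral_mono (integrable_const _) (intble2 hf h1 h2) h1

end Aux


lemma nonempty_of_prob {X : Type*} [MeasurableSpace X] (μ : Measure X)
    [IsProbabilityMeasure μ] : Nonempty X := by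
  by_contra h
  rw [not_nonempty_iff] at h
  have h1 : μ Set.univ = 1 := measure_univ
  rw [Set.univ_eq_empty_iff.2 h] at h1
  simp at h1

lemma doeblin_step {X : Type*} [MeasurableSpace X] (μ : Measure X) [IsProbabilityMeasure μ]
    (w g1 h : X → ℝ) (A B c d s CL CU : ℝ)
    (hwm : Measurable w) (hg1m : Measurable g1) (hhm : Measurable h)
    (hApos : 0 < A) (hAB : A ≤ B)
    (hwlb : ∀ u, A * g1 u ≤ w u) (hwub : ∀ u, w u ≤ B * g1 u)
    (hCL : 0 < CL) (hg1lb : ∀ u, CL ≤ g1 u) (hg1ub : ∀ u, g1 u ≤ CU)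
    (hc : c = A / B)
    (hhs : ∀ u, 0 ≤ h u - s) (hhd : ∀ u, h u - s ≤ d) :
    0 ≤ (∫ u, w u * h u ∂μ) / (∫ u, w u ∂μ) - s
        - c * (∫ u, g1 u * (h u - s) ∂μ) / (∫ u, g1 u ∂μ) ∧
      (∫ u, w u * h u ∂μ) / (∫ u, w u ∂μ) - s
        - c * (∫ u, g1 u * (h u - s) ∂μ) / (∫ u, g1 u ∂μ) ≤ (1 - c) * d := by
  obtain ⟨x0⟩ := nonempty_of_prob μ
  have hBpos : 0 < B := lt_of_lt_of_le hApos hAB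
  have hg1pos : ∀ u, 0 < g1 u := fun u => lt_of_lt_of_le hCL (hg1lb u)
  have hwpos : ∀ u, 0 < w u := fun u =>
    lt_of_lt_of_le (mul_pos hApos (hg1pos u)) (hwlb u)
  have hCU : 0 < CU := lt_of_lt_of_le hCL (le_trans (hg1lb x0) (hg1ub x0))
  have hd0 : 0 ≤ d := le_trans (hhs x0) (hhd x0)
  have hcnn : 0 ≤ c := hc ▸ div_nonneg hApos.le hBpos.le
  have hwubC : ∀ u, w u ≤ B * CU := fun u =>
    le_trans (hwub u) (mul_le_mul_of_nonneg_left (hg1ub u) hBpos.le)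
  have hhabs : ∀ u, |h u| ≤ |s| + d := fun u => abs_le.2
    ⟨by linarith [neg_abs_le s, hhs u], by linarith [le_abs_self s, hhd u]⟩
  -- integrability
  have hg1int : Integrable g1 μ := intble2 hg1m (fun u => (hg1pos u).le) hg1ub
  have hwint : Integrable w μ := intble2 hwm (fun u => (hwpos u).le) hwubC
  have hwh : Integrable (fun u => w u * h u) μ := by
    apply intble (hwm.mul hhm) (C := B * CU * (|s| + d))
    intro u
    rw [Pi.mul_apply, abs_mul, abs_of_pos (hwpos u)]
    exact mul_le_mul (hwubC u) (hhabs u) (abs_nonneg _) (by positivity)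
  have hwhs : Integrable (fun u => w u * (h u - s)) μ :=
    intble2 (hwm.mul (hhm.sub measurable_const)) (lo := 0) (hi := B * CU * d)
      (fun u => mul_nonneg (hwpos u).le (hhs u))
      (fun u => mul_le_mul (hwubC u) (hhd u) (hhs u) (by positivity))
  have hg1hs : Integrable (fun u => g1 u * (h u - s)) μ :=
    intble2 (hg1m.mul (hhm.sub measurable_const)) (lo := 0) (hi := CU * d)
      (fun u => mul_nonneg (hg1pos u).le (hhs u))
      (fun u => mul_le_mul (hg1ub u) (hhd u) (hhs u) hCU.le)
  -- positivity of denominators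
  have hTpos : 0 < ∫ u, g1 u ∂μ :=
    lt_of_lt_of_le hCL (const_le_integral hg1m hg1lb hg1ub)
  have hZlb : A * ∫ u, g1 u ∂μ ≤ ∫ u, w u ∂μ := by
    calc A * ∫ u, g1 u ∂μ = ∫ u, A * g1 u ∂μ := (integral_const_mul _ _).symm
    _ ≤ ∫ u, w u ∂μ := integral_mono (hg1int.const_mul A) hwint hwlb
  have hZub : ∫ u, w u ∂μ ≤ B * ∫ u, g1 u ∂μ := by
    calc ∫ u, w u ∂μ ≤ ∫ u, B * g1 u ∂μ := integral_mono hwint (hg1int.const_mul B) hwub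
    _ = B * ∫ u, g1 u ∂μ := integral_const_mul _ _
  have hZpos : 0 < ∫ u, w u ∂μ := lt_of_lt_of_le (mul_pos hApos hTpos) hZlb
  -- numerator identity
  have hNZ : (∫ u, w u * h u ∂μ) / (∫ u, w u ∂μ) - s
      = (∫ u, w u * (h u - s) ∂μ) / (∫ u, w u ∂μ) := by
    have e1 : ∫ u, w u * (h u - s) ∂μ = (∫ u, w u * h u ∂μ) - s * ∫ u, w u ∂μ := by
      have e0 : (fun u => w u * (h u - s)) = fun u => w u * h u - s * w u :=
        funext fun u => by ring
      rw [e0, integral_sub hwh (hwint.const_mul s), integral_const_mul]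
    rw [e1, sub_div, mul_div_assoc, div_self hZpos.ne', mul_one]
  -- Doeblin domination
  have hcB : c * B = A := by rw [hc]; field_simp
  have hkey : ∀ u, c * g1 u / (∫ u, g1 u ∂μ) ≤ w u / (∫ u, w u ∂μ) := by
    intro u
    rw [div_le_div_iff₀ hTpos hZpos]
    calc c * g1 u * ∫ u, w u ∂μ ≤ c * g1 u * (B * ∫ u, g1 u ∂μ) :=
          mul_le_mul_of_nonneg_left hZub (mul_nonneg hcnn (hg1pos u).le)
    _ = c * B * (g1 u * ∫ u, g1 u ∂μ) := by ring
    _ = A * g1 u * ∫ u, g1 u ∂μ := by rw [hcB]; ring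
    _ ≤ w u * ∫ u, g1 u ∂μ := mul_le_mul_of_nonneg_right (hwlb u) hTpos.le
  have e2 : c * (∫ u, g1 u * (h u - s) ∂μ) / (∫ u, g1 u ∂μ)
      = ∫ u, c * (g1 u * (h u - s)) / (∫ u, g1 u ∂μ) ∂μ := by
    rw [integral_div, integral_const_mul]
  have e3 : (∫ u, w u * (h u - s) ∂μ) / (∫ u, w u ∂μ)
      = ∫ u, w u * (h u - s) / (∫ u, w u ∂μ) ∂μ := (integral_div _ _).symm
  have intL : Integrable (fun u => c * (g1 u * (h u - s)) / (∫ u, g1 u ∂μ)) μ :=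
    (hg1hs.const_mul c).div_const _
  have intR : Integrable (fun u => w u * (h u - s) / (∫ u, w u ∂μ)) μ :=
    hwhs.div_const _
  have hlow : c * (∫ u, g1 u * (h u - s) ∂μ) / (∫ u, g1 u ∂μ)
      ≤ (∫ u, w u * (h u - s) ∂μ) / (∫ u, w u ∂μ) := by
    rw [e2, e3]
    apply integral_mono intL intR
    intro u
    show c * (g1 u * (h u - s)) / (∫ u, g1 u ∂μ) ≤ w u * (h u - s) / (∫ u, w u ∂μ)
    have h5 : c * (g1 u * (h u - s)) / (∫ u, g1 u ∂μ)
        = (c * g1 u / (∫ u, g1 u ∂μ)) * (h u - s) := by ring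
    have h6 : w u * (h u - s) / (∫ u, w u ∂μ)
        = (w u / (∫ u, w u ∂μ)) * (h u - s) := by ring
    rw [h5, h6]
    exact mul_le_mul_of_nonneg_right (hkey u) (hhs u)
  have intD : Integrable (fun u => (w u / (∫ u, w u ∂μ)
      - c * g1 u / (∫ u, g1 u ∂μ)) * d) μ :=
    (((hwint.div_const _).sub ((hg1int.const_mul c).div_const _)).mul_const d)
  have hup : (∫ u, w u * (h u - s) ∂μ) / (∫ u, w u ∂μ)
      - c * (∫ u, g1 u * (h u - s) ∂μ) / (∫ u, g1 u ∂μ) ≤ (1 - c) * d := by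
    rw [e2, e3, ← integral_sub intR intL]
    have hpt : ∀ u, w u * (h u - s) / (∫ u, w u ∂μ)
        - c * (g1 u * (h u - s)) / (∫ u, g1 u ∂μ)
        ≤ (w u / (∫ u, w u ∂μ) - c * g1 u / (∫ u, g1 u ∂μ)) * d := by
      intro u
      have h7 : w u * (h u - s) / (∫ u, w u ∂μ)
          - c * (g1 u * (h u - s)) / (∫ u, g1 u ∂μ)
          = (w u / (∫ u, w u ∂μ) - c * g1 u / (∫ u, g1 u ∂μ)) * (h u - s) := by ring
      rw [h7]
      exact mul_le_mul_of_nonneg_left (hhd u) (sub_nonneg.2 (hkey u))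
    calc ∫ u, (w u * (h u - s) / (∫ u, w u ∂μ)
          - c * (g1 u * (h u - s)) / (∫ u, g1 u ∂μ)) ∂μ
        ≤ ∫ u, (w u / (∫ u, w u ∂μ) - c * g1 u / (∫ u, g1 u ∂μ)) * d ∂μ :=
          integral_mono (intR.sub intL) intD (fun u => hpt u)
    _ = (1 - c) * d := by
        rw [integral_mul_const,
          integral_sub (hwint.div_const _) ((hg1int.const_mul c).div_const _),
          integral_div, integral_div, integral_const_mul, div_self hZpos.ne',
          mul_div_assoc, div_self hTpos.ne', mul_one]
  constructor
  · linarith [hNZ, hlow]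
  · linarith [hNZ, hup]

structure Nice {X : Type*} [MeasurableSpace X] (G : X → ℝ) (q : X → X → ℝ)
    (εm εp : ℝ) (η : ℕ → Measure X) : Prop where
  hq_meas : Measurable fun p : X × X => q p.1 p.2
  hεm_pos : 0 < εm
  hεle : εm ≤ εp
  hq_lb : ∀ x y, εm ≤ q x y
  hq_ub : ∀ x y, q x y ≤ εp
  hG_meas : Measurable G
  hG_lb : ∀ x, εm ≤ G x
  hG_ub : ∀ x, G x ≤ εp
  hη : ∀ p, IsProbabilityMeasure (η p)

namespace Nice

variable {X : Type*} [MeasurableSpace X] {G : X → ℝ} {q : X → X → ℝ} {εm εp : ℝ}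
  {η : ℕ → Measure X} (S : Nice G q εm εp η)

include S

lemma hεp_pos : 0 < εp := lt_of_lt_of_le S.hεm_pos S.hεle

lemma nonempty : Nonempty X := by
  by_contra h
  rw [not_nonempty_iff] at h
  haveI := S.hη 0
  have h1 : (η 0) Set.univ = 1 := measure_univ
  rw [Set.univ_eq_empty_iff.2 h] at h1
  simp at h1

noncomputable def lam (_S : Nice G q εm εp η) (p : ℕ) : ℝ := ∫ y, G y ∂(η p)

noncomputable def den (_S : Nice G q εm εp η) (p : ℕ) (x' : X) : ℝ := ∫ y, q y x' ∂(η p)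

noncomputable def ker (S : Nice G q εm εp η) (p : ℕ) (x x' : X) : ℝ := S.lam p * q x x' / S.den p x'

lemma QNop_eq (p : ℕ) (φ : X → ℝ) (x : X) :
    QNop G q η p φ x = ∫ x', S.ker p x x' * φ x' ∂(η (p + 1)) := rfl

lemma QNgap_zero (p : ℕ) (φ : X → ℝ) : QNgap G q η p 0 φ = φ := rfl

lemma QNgap_succ (p k : ℕ) (φ : X → ℝ) :
    QNgap G q η p (k + 1) φ = QNop G q η p (QNgap G q η (p + 1) k φ) := rfl

lemma lam_lb (p : ℕ) : εm ≤ S.lam p := by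
  haveI := S.hη p
  exact const_le_integral S.hG_meas S.hG_lb S.hG_ub

lemma lam_ub (p : ℕ) : S.lam p ≤ εp := by
  haveI := S.hη p
  exact integral_le_const S.hG_meas S.hG_lb S.hG_ub

lemma lam_pos (p : ℕ) : 0 < S.lam p := lt_of_lt_of_le S.hεm_pos (S.lam_lb p)

lemma qmeas_left (x' : X) : Measurable fun y => q y x' :=
  S.hq_meas.comp (measurable_id.prodMk measurable_const)

lemma qmeas_right (x : X) : Measurable fun y => q x y :=
  S.hq_meas.comp (measurable_const.prodMk measurable_id)

lemma den_lb (p : ℕ) (x' : X) : εm ≤ S.den p x' := by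
  haveI := S.hη p
  exact const_le_integral (S.qmeas_left x') (fun y => S.hq_lb y x') (fun y => S.hq_ub y x')

lemma den_ub (p : ℕ) (x' : X) : S.den p x' ≤ εp := by
  haveI := S.hη p
  exact integral_le_const (S.qmeas_left x') (fun y => S.hq_lb y x') (fun y => S.hq_ub y x')

lemma den_pos (p : ℕ) (x' : X) : 0 < S.den p x' := lt_of_lt_of_le S.hεm_pos (S.den_lb p x')

lemma den_meas (p : ℕ) : Measurable (S.den p) := by
  haveI := S.hη p
  have : StronglyMeasurable fun z : X × X => q z.2 z.1 :=
    (S.hq_meas.comp measurable_swap).stronglyMeasurable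
  exact this.integral_prod_right'.measurable

lemma ker_lb (p : ℕ) (x x' : X) : S.lam p * (εm / εp) ≤ S.ker p x x' := by
  have h1 : εm / εp ≤ q x x' / S.den p x' :=
    div_le_div₀ (le_trans S.hεm_pos.le (S.hq_lb x x')) (S.hq_lb x x') (S.den_pos p x')
      (S.den_ub p x')
  calc S.lam p * (εm / εp) ≤ S.lam p * (q x x' / S.den p x') :=
        mul_le_mul_of_nonneg_left h1 (S.lam_pos p).le
  _ = S.ker p x x' := (mul_div_assoc _ _ _).symm

lemma ker_ub (p : ℕ) (x x' : X) : S.ker p x x' ≤ S.lam p * (εp / εm) := by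
  have h1 : q x x' / S.den p x' ≤ εp / εm :=
    div_le_div₀ (le_trans S.hεm_pos.le S.hεle) (S.hq_ub x x') S.hεm_pos (S.den_lb p x')
  calc S.ker p x x' = S.lam p * (q x x' / S.den p x') := mul_div_assoc _ _ _
  _ ≤ S.lam p * (εp / εm) := mul_le_mul_of_nonneg_left h1 (S.lam_pos p).le

lemma ker_glb (p : ℕ) (x x' : X) : εm * (εm / εp) ≤ S.ker p x x' :=
  le_trans (mul_le_mul_of_nonneg_right (S.lam_lb p)
    (div_nonneg S.hεm_pos.le S.hεp_pos.le)) (S.ker_lb p x x')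

lemma ker_gub (p : ℕ) (x x' : X) : S.ker p x x' ≤ εp * (εp / εm) :=
  le_trans (S.ker_ub p x x') (mul_le_mul_of_nonneg_right (S.lam_ub p)
    (div_nonneg S.hεp_pos.le S.hεm_pos.le))

lemma ker_pos (p : ℕ) (x x' : X) : 0 < S.ker p x x' :=
  lt_of_lt_of_le (by have := S.hεm_pos; have := S.hεp_pos; positivity) (S.ker_glb p x x')

lemma ker_meas_pair (p : ℕ) : Measurable fun z : X × X => S.ker p z.1 z.2 :=
  (measurable_const.mul S.hq_meas).div ((S.den_meas p).comp measurable_snd)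

lemma ker_meas_right (p : ℕ) (x : X) : Measurable fun x' => S.ker p x x' :=
  (measurable_const.mul (S.qmeas_right x)).div (S.den_meas p)


lemma gap_meas (k : ℕ) (φ : X → ℝ) (hφ : Measurable φ) :
    ∀ p, Measurable (QNgap G q η p k φ) := by
  induction k with
  | zero => exact fun p => hφ
  | succ k ih =>
    intro p
    haveI := S.hη (p + 1)
    rw [S.QNgap_succ]
    have hF : StronglyMeasurable fun z : X × X =>
        S.ker p z.1 z.2 * QNgap G q η (p + 1) k φ z.2 :=
      ((S.ker_meas_pair p).mul ((ih (p + 1)).comp measurable_snd)).stronglyMeasurable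
    exact hF.integral_prod_right'.measurable

lemma gap_one_bdd (k : ℕ) : ∀ p x,
    (εm * (εm / εp)) ^ k ≤ QNgap G q η p k (fun _ => (1 : ℝ)) x ∧
      QNgap G q η p k (fun _ => (1 : ℝ)) x ≤ (εp * (εp / εm)) ^ k := by
  have hcl : 0 < εm * (εm / εp) := by
    have h1 := S.hεm_pos; have h2 := S.hεp_pos; positivity
  have hcu : 0 < εp * (εp / εm) := by
    have h1 := S.hεm_pos; have h2 := S.hεp_pos; positivity
  induction k with
  | zero => intro p x; simp [S.QNgap_zero]
  | succ k ih =>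
    intro p x
    haveI := S.hη (p + 1)
    rw [S.QNgap_succ, S.QNop_eq]
    have hg1m : Measurable (QNgap G q η (p + 1) k (fun _ => (1 : ℝ))) :=
      S.gap_meas k _ measurable_const (p + 1)
    have hfm : Measurable fun x' => S.ker p x x' * QNgap G q η (p + 1) k (fun _ => (1 : ℝ)) x' :=
      (S.ker_meas_right p x).mul hg1m
    have hlow : ∀ x', (εm * (εm / εp)) ^ (k + 1) ≤
        S.ker p x x' * QNgap G q η (p + 1) k (fun _ => (1 : ℝ)) x' := by
      intro x'
      rw [pow_succ']
      exact mul_le_mul (S.ker_glb p x x') (ih (p + 1) x').1 (by positivity)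
        (S.ker_pos p x x').le
    have hhigh : ∀ x', S.ker p x x' * QNgap G q η (p + 1) k (fun _ => (1 : ℝ)) x' ≤
        (εp * (εp / εm)) ^ (k + 1) := by
      intro x'
      rw [pow_succ']
      exact mul_le_mul (S.ker_gub p x x') (ih (p + 1) x').2
        (le_trans (by positivity) (ih (p + 1) x').1) hcu.le
    exact ⟨const_le_integral hfm hlow hhigh, integral_le_const hfm hlow hhigh⟩

lemma gap_one_pos (k p : ℕ) (x : X) : 0 < QNgap G q η p k (fun _ => (1 : ℝ)) x := by
  have hcl : 0 < εm * (εm / εp) := by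
    have h1 := S.hεm_pos; have h2 := S.hεp_pos; positivity
  exact lt_of_lt_of_le (by positivity) (S.gap_one_bdd k p x).1

lemma gap_abs_le {φ : X → ℝ} {b : ℝ} (hφ : Measurable φ) (hb : ∀ x, |φ x| ≤ b)
    (k : ℕ) : ∀ p x, |QNgap G q η p k φ x| ≤ b * QNgap G q η p k (fun _ => (1 : ℝ)) x := by
  induction k with
  | zero => intro p x; rw [S.QNgap_zero, S.QNgap_zero, mul_one]; exact hb x
  | succ k ih =>
    intro p x
    haveI := S.hη (p + 1)
    rw [S.QNgap_succ, S.QNgap_succ, S.QNop_eq, S.QNop_eq]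
    set g := QNgap G q η (p + 1) k φ with hg
    set g1 := QNgap G q η (p + 1) k (fun _ => (1 : ℝ)) with hg1
    have hb0 : 0 ≤ b := le_trans (abs_nonneg _) (hb x)
    have hgm : Measurable g := S.gap_meas k φ hφ (p + 1)
    have hg1m : Measurable g1 := S.gap_meas k _ measurable_const (p + 1)
    have hg1lb := fun x' => (S.gap_one_bdd k (p + 1) x').1
    have hg1ub := fun x' => (S.gap_one_bdd k (p + 1) x').2
    have hgb : ∀ u, |g u| ≤ b * g1 u := ih (p + 1)
    have hgub : ∀ u, |g u| ≤ b * (εp * (εp / εm)) ^ k := fun u =>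
      le_trans (hgb u) (mul_le_mul_of_nonneg_left (hg1ub u) hb0)
    have hKu : 0 < εp * (εp / εm) := by
      have h1 := S.hεm_pos; have h2 := S.hεp_pos; positivity
    have hcuk : (0:ℝ) < (εp * (εp / εm)) ^ k := pow_pos hKu k
    have hcl : 0 < εm * (εm / εp) := by
      have h1 := S.hεm_pos; have h2 := S.hεp_pos; positivity
    have h1 : |∫ x', S.ker p x x' * g x' ∂(η (p + 1))| ≤
        ∫ x', |S.ker p x x'| * |g x'| ∂(η (p + 1)) := by
      simpa [Real.norm_eq_abs] using
        norm_integral_le_integral_norm (fun x' => S.ker p x x' * g x') (μ := η (p + 1))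
    have h2 : ∫ x', |S.ker p x x'| * |g x'| ∂(η (p + 1)) ≤
        ∫ x', b * (S.ker p x x' * g1 x') ∂(η (p + 1)) := by
      apply integral_mono
      · apply intble2 (((S.ker_meas_right p x).abs).mul hgm.abs)
          (lo := 0) (hi := εp * (εp / εm) * (b * (εp * (εp / εm)) ^ k))
        · intro x'; show 0 ≤ |S.ker p x x'| * |g x'|; positivity
        · intro x'
          show |S.ker p x x'| * |g x'| ≤ _
          exact mul_le_mul (by rw [abs_of_pos (S.ker_pos p x x')]; exact S.ker_gub p x x')
            (hgub x') (abs_nonneg _) hKu.le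
      · apply intble2 (measurable_const.mul ((S.ker_meas_right p x).mul hg1m))
          (lo := 0) (hi := b * (εp * (εp / εm) * (εp * (εp / εm)) ^ k))
        · intro x'
          have h3 := (S.ker_pos p x x').le
          have h4 : 0 ≤ g1 x' := le_trans (pow_pos hcl k).le (hg1lb x')
          show 0 ≤ b * (S.ker p x x' * g1 x')
          positivity
        · intro x'
          apply mul_le_mul_of_nonneg_left _ hb0
          exact mul_le_mul (S.ker_gub p x x') (hg1ub x')
            (le_trans (pow_pos hcl k).le (hg1lb x')) hKu.le
      · intro x'
        show |S.ker p x x'| * |g x'| ≤ b * (S.ker p x x' * g1 x')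
        rw [abs_of_pos (S.ker_pos p x x')]
        calc S.ker p x x' * |g x'| ≤ S.ker p x x' * (b * g1 x') :=
              mul_le_mul_of_nonneg_left (hgb x') (S.ker_pos p x x').le
        _ = b * (S.ker p x x' * g1 x') := by ring
    calc |∫ x', S.ker p x x' * g x' ∂(η (p + 1))| ≤
        ∫ x', b * (S.ker p x x' * g1 x') ∂(η (p + 1)) := le_trans h1 h2
    _ = b * ∫ x', S.ker p x x' * g1 x' ∂(η (p + 1)) := integral_const_mul _ _

lemma gap_abs_ub {φ : X → ℝ} {b : ℝ} (hφ : Measurable φ) (hb : ∀ x, |φ x| ≤ b)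
    (k p : ℕ) (x : X) : |QNgap G q η p k φ x| ≤ b * (εp * (εp / εm)) ^ k := by
  have hb0 : 0 ≤ b := le_trans (abs_nonneg _) (hb x)
  exact le_trans (S.gap_abs_le hφ hb k p x)
    (mul_le_mul_of_nonneg_left (S.gap_one_bdd k p x).2 hb0)

lemma op_eta (p : ℕ) {ψ : X → ℝ} {c : ℝ} (hψ : Measurable ψ) (hc : ∀ x, |ψ x| ≤ c) :
    ∫ x, QNop G q η p ψ x ∂(η p) = S.lam p * ∫ y, ψ y ∂(η (p + 1)) := by
  haveI := S.hη p
  haveI := S.hη (p + 1)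
  have hc0 : 0 ≤ c := le_trans (abs_nonneg _) (hc (Classical.choice S.nonempty))
  have hint : Integrable (Function.uncurry fun x x' => S.ker p x x' * ψ x')
      ((η p).prod (η (p + 1))) := by
    apply intble (C := εp * (εp / εm) * c)
    · exact (S.ker_meas_pair p).mul (hψ.comp measurable_snd)
    · intro z
      show |S.ker p z.1 z.2 * ψ z.2| ≤ _
      rw [abs_mul, abs_of_pos (S.ker_pos p z.1 z.2)]
      exact mul_le_mul (S.ker_gub p z.1 z.2) (hc z.2) (abs_nonneg _)
        (by have h1 := S.hεm_pos; have h2 := S.hεp_pos; positivity)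
  calc ∫ x, QNop G q η p ψ x ∂(η p)
      = ∫ x, ∫ x', S.ker p x x' * ψ x' ∂(η (p + 1)) ∂(η p) := by
        simp only [S.QNop_eq]
  _ = ∫ x', ∫ x, S.ker p x x' * ψ x' ∂(η p) ∂(η (p + 1)) := integral_integral_swap hint
  _ = ∫ x', S.lam p * ψ x' ∂(η (p + 1)) := by
        apply integral_congr_ae
        apply Filter.Eventually.of_forall
        intro x'
        have hrw : ∀ x, S.ker p x x' * ψ x' = (S.lam p * ψ x' / S.den p x') * q x x' := by
          intro x; unfold Nice.ker; ring
        simp only [hrw]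
        rw [integral_const_mul]
        have : ∫ x, q x x' ∂(η p) = S.den p x' := rfl
        rw [this, div_mul_cancel₀ _ (S.den_pos p x').ne']
  _ = S.lam p * ∫ y, ψ y ∂(η (p + 1)) := integral_const_mul _ _

lemma gap_eta {φ : X → ℝ} {b : ℝ} (hφ : Measurable φ) (hb : ∀ x, |φ x| ≤ b) (k : ℕ) :
    ∀ p, ∫ x, QNgap G q η p k φ x ∂(η p) =
      (∏ j ∈ Finset.range k, S.lam (p + j)) * ∫ y, φ y ∂(η (p + k)) := by
  induction k with
  | zero => intro p; simp [S.QNgap_zero]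
  | succ k ih =>
    intro p
    rw [S.QNgap_succ]
    rw [S.op_eta p (S.gap_meas k φ hφ (p + 1)) (fun x => S.gap_abs_ub hφ hb k (p + 1) x)]
    rw [ih (p + 1)]
    have h1 : p + 1 + k = p + (k + 1) := by omega
    rw [h1]
    rw [Finset.prod_range_succ']
    have h2 : (∏ j ∈ Finset.range k, S.lam (p + (j + 1))) =
        ∏ j ∈ Finset.range k, S.lam (p + 1 + j) :=
      Finset.prod_congr rfl fun j _ => by rw [show p + (j + 1) = p + 1 + j by omega]
    rw [h2, show p + 0 = p from rfl]
    ring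

lemma contract {φ : X → ℝ} {b : ℝ} (hφ : Measurable φ) (hb : ∀ x, |φ x| ≤ b) (k : ℕ) :
    ∀ p x y, |QNgap G q η p k φ x / QNgap G q η p k (fun _ => (1 : ℝ)) x
      - QNgap G q η p k φ y / QNgap G q η p k (fun _ => (1 : ℝ)) y|
      ≤ 2 * b * (1 - (εm / εp) ^ 2) ^ k := by
  haveI hne : Nonempty X := S.nonempty
  have hm := S.hεm_pos
  have hp := S.hεp_pos
  have hb0 : 0 ≤ b := le_trans (abs_nonneg _) (hb (Classical.choice hne))
  have hcl : 0 < εm * (εm / εp) := by positivity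
  have hKu : 0 < εp * (εp / εm) := by positivity
  have hρ0 : 0 ≤ 1 - (εm / εp) ^ 2 := by
    have h1 : εm / εp ≤ 1 := div_le_one_of_le₀ S.hεle hp.le
    have h2 : 0 ≤ εm / εp := by positivity
    nlinarith
  induction k with
  | zero =>
    intro p x y
    simp only [S.QNgap_zero, pow_zero, mul_one, div_one]
    have hx := abs_le.1 (hb x)
    have hy := abs_le.1 (hb y)
    rw [abs_le]
    constructor <;> [linarith; linarith]
  | succ k ih =>
    intro p x y
    haveI := S.hη (p + 1)
    set g : X → ℝ := QNgap G q η (p + 1) k φ with hgdef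
    set g1 : X → ℝ := QNgap G q η (p + 1) k (fun _ => (1 : ℝ)) with hg1def
    have hgm : Measurable g := S.gap_meas k φ hφ (p + 1)
    have hg1m : Measurable g1 := S.gap_meas k _ measurable_const (p + 1)
    have hg1pos : ∀ u, 0 < g1 u := fun u => S.gap_one_pos k (p + 1) u
    have hg1lb : ∀ u, (εm * (εm / εp)) ^ k ≤ g1 u := fun u => (S.gap_one_bdd k (p + 1) u).1
    have hg1ub : ∀ u, g1 u ≤ (εp * (εp / εm)) ^ k := fun u => (S.gap_one_bdd k (p + 1) u).2
    set h : X → ℝ := fun u => g u / g1 u with hhdef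
    have hhm : Measurable h := hgm.div hg1m
    have hhb : ∀ u, |h u| ≤ b := by
      intro u
      rw [hhdef]
      rw [abs_div, abs_of_pos (hg1pos u), div_le_iff₀ (hg1pos u)]
      exact S.gap_abs_le hφ hb k (p + 1) u
    have hIH : ∀ u v, |h u - h v| ≤ 2 * b * (1 - (εm / εp) ^ 2) ^ k := fun u v =>
      ih (p + 1) u v
    have hbdd : BddBelow (Set.range h) :=
      ⟨-b, by rintro z ⟨u, rfl⟩; linarith [(abs_le.1 (hhb u)).1]⟩
    set s : ℝ := ⨅ u, h u with hsdef
    have hhs : ∀ u, 0 ≤ h u - s := fun u => by linarith [ciInf_le hbdd u]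
    have hhd : ∀ u, h u - s ≤ 2 * b * (1 - (εm / εp) ^ 2) ^ k := by
      intro u
      have h1 : h u - 2 * b * (1 - (εm / εp) ^ 2) ^ k ≤ s :=
        le_ciInf fun v => by linarith [(abs_le.1 (hIH u v)).2]
      linarith
    -- identify the ratios
    have hnum : ∀ z, QNgap G q η p (k + 1) φ z
        = ∫ x', (S.ker p z x' * g1 x') * h x' ∂(η (p + 1)) := by
      intro z
      rw [S.QNgap_succ, S.QNop_eq]
      apply integral_congr_ae
      apply Filter.Eventually.of_forall
      intro x'
      show S.ker p z x' * g x' = (S.ker p z x' * g1 x') * h x'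
      rw [hhdef]
      rw [mul_assoc, mul_comm (g1 x') _, div_mul_cancel₀ _ (hg1pos x').ne']
    have hden : ∀ z, QNgap G q η p (k + 1) (fun _ => (1 : ℝ)) z
        = ∫ x', S.ker p z x' * g1 x' ∂(η (p + 1)) := fun z => by
      rw [S.QNgap_succ, S.QNop_eq]
    have hcAB : (εm / εp) ^ 2 = S.lam p * (εm / εp) / (S.lam p * (εp / εm)) := by
      have hL := (S.lam_pos p).ne'
      have hm' := hm.ne'
      have hp' := hp.ne'
      field_simp
    have hstep := fun z : X => doeblin_step (η (p + 1))
      (fun x' => S.ker p z x' * g1 x') g1 h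
      (S.lam p * (εm / εp)) (S.lam p * (εp / εm)) ((εm / εp) ^ 2)
      (2 * b * (1 - (εm / εp) ^ 2) ^ k) s
      ((εm * (εm / εp)) ^ k) ((εp * (εp / εm)) ^ k)
      ((S.ker_meas_right p z).mul hg1m) hg1m hhm
      (mul_pos (S.lam_pos p) (by positivity))
      (mul_le_mul_of_nonneg_left (div_le_div₀ hp.le S.hεle hm S.hεle) (S.lam_pos p).le)
      (fun u => mul_le_mul_of_nonneg_right (S.ker_lb p z u) (hg1pos u).le)
      (fun u => mul_le_mul_of_nonneg_right (S.ker_ub p z u) (hg1pos u).le)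
      (pow_pos hcl k) hg1lb hg1ub hcAB hhs hhd
    have kx := hstep x
    have ky := hstep y
    rw [← hnum x, ← hden x] at kx
    rw [← hnum y, ← hden y] at ky
    have hpow : (1 - (εm / εp) ^ 2) * (2 * b * (1 - (εm / εp) ^ 2) ^ k)
        = 2 * b * (1 - (εm / εp) ^ 2) ^ (k + 1) := by rw [pow_succ]; ring
    rw [abs_le]
    constructor
    · linarith [kx.1, kx.2, ky.1, ky.2]
    · linarith [kx.1, kx.2, ky.1, ky.2]


lemma gap_one_sharp (n : ℕ) (hn : 1 ≤ n) (x : X) :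
    QNgap G q η 0 n (fun _ => (1 : ℝ)) x ≤ (εp / εm) * ∏ p ∈ Finset.range n, S.lam p := by
  obtain ⟨m, rfl⟩ : ∃ m, n = m + 1 := ⟨n - 1, by omega⟩
  have hm := S.hεm_pos
  have hp := S.hεp_pos
  rw [S.QNgap_succ, S.QNop_eq]
  simp only [Nat.zero_add]
  haveI := S.hη 1
  haveI := S.hη (1 + m)
  have hg1m : Measurable (QNgap G q η 1 m (fun _ => (1 : ℝ))) :=
    S.gap_meas m _ measurable_const 1
  have hg1pos : ∀ u, 0 < QNgap G q η 1 m (fun _ => (1 : ℝ)) u := S.gap_one_pos m 1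
  have hg1ub : ∀ u, QNgap G q η 1 m (fun _ => (1 : ℝ)) u ≤ (εp * (εp / εm)) ^ m :=
    fun u => (S.gap_one_bdd m 1 u).2
  have int1 : Integrable (fun x' => S.ker 0 x x' * QNgap G q η 1 m (fun _ => (1 : ℝ)) x')
      (η 1) :=
    intble2 ((S.ker_meas_right 0 x).mul hg1m) (lo := 0)
      (hi := εp * (εp / εm) * (εp * (εp / εm)) ^ m)
      (fun x' => mul_nonneg (S.ker_pos 0 x x').le (hg1pos x').le)
      (fun x' => mul_le_mul (S.ker_gub 0 x x') (hg1ub x') (hg1pos x').le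
        (by positivity))
  have int2 : Integrable (fun x' => (S.lam 0 * (εp / εm)) *
      QNgap G q η 1 m (fun _ => (1 : ℝ)) x') (η 1) :=
    (intble2 hg1m (lo := 0) (hi := (εp * (εp / εm)) ^ m) (fun u => (hg1pos u).le)
      hg1ub).const_mul _
  calc ∫ x', S.ker 0 x x' * QNgap G q η 1 m (fun _ => (1 : ℝ)) x' ∂(η 1)
      ≤ ∫ x', (S.lam 0 * (εp / εm)) * QNgap G q η 1 m (fun _ => (1 : ℝ)) x' ∂(η 1) :=
        integral_mono int1 int2
          (fun x' => mul_le_mul_of_nonneg_right (S.ker_ub 0 x x') (hg1pos x').le)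
  _ = (S.lam 0 * (εp / εm)) * ∫ x', QNgap G q η 1 m (fun _ => (1 : ℝ)) x' ∂(η 1) :=
        integral_const_mul _ _
  _ = (S.lam 0 * (εp / εm)) * ((∏ j ∈ Finset.range m, S.lam (1 + j)) * 1) := by
        rw [S.gap_eta measurable_const (b := 1) (fun _ => by norm_num) m 1]
        norm_num
  _ = (εp / εm) * ∏ p ∈ Finset.range (m + 1), S.lam p := by
        rw [Finset.prod_range_succ']
        rw [Finset.prod_congr rfl fun j _ =>
          (by rw [show j + 1 = 1 + j by omega] : S.lam (j + 1) = S.lam (1 + j))]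
        ring

lemma main (μ' : Measure X) [IsProbabilityMeasure μ'] {φ : X → ℝ} (hφ : Measurable φ)
    {b : ℝ} (hb : ∀ x, |φ x| ≤ b) (n : ℕ) (hn : 1 ≤ n) :
    |(∏ p ∈ Finset.range n, ∫ y, G y ∂(η p))⁻¹ * ∫ x, QNgap G q η 0 n φ x ∂μ'
        - (∫ x, (QNgap G q η 0 n (fun _ => (1 : ℝ)) x /
            ∫ w, QNgap G q η 0 n (fun _ => (1 : ℝ)) w ∂(η 0)) ∂μ') * ∫ x, φ x ∂(η n)|
      ≤ 2 * b * (1 - (εm / εp) ^ 2) ^ n * (εp / εm) ∧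
    |(∫ x, QNgap G q η 0 n φ x ∂μ') / (∫ x, QNgap G q η 0 n (fun _ => (1 : ℝ)) x ∂μ')
        - ∫ x, φ x ∂(η n)|
      ≤ 2 * b * (1 - (εm / εp) ^ 2) ^ n * (εp / εm) ^ 2 := by
  haveI := S.hη 0
  haveI := S.hη n
  have hm := S.hεm_pos
  have hp := S.hεp_pos
  have hb0 : 0 ≤ b := le_trans (abs_nonneg _) (hb (Classical.choice S.nonempty))
  have hcl : 0 < εm * (εm / εp) := by positivity
  have hKu : 0 < εp * (εp / εm) := by positivity
  have hρ0 : 0 ≤ 1 - (εm / εp) ^ 2 := by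
    have h1 : εm / εp ≤ 1 := div_le_one_of_le₀ S.hεle hp.le
    have h2 : 0 ≤ εm / εp := by positivity
    nlinarith
  have hLrw : (∏ p ∈ Finset.range n, ∫ y, G y ∂(η p)) = ∏ p ∈ Finset.range n, S.lam p := rfl
  rw [hLrw]
  set ρn : ℝ := 2 * b * (1 - (εm / εp) ^ 2) ^ n with hρn
  have hρn0 : 0 ≤ ρn := by positivity
  set Q1 : X → ℝ := QNgap G q η 0 n (fun _ => (1 : ℝ)) with hQ1
  set Qφ : X → ℝ := QNgap G q η 0 n φ with hQφ
  set E : ℝ := ∫ x, φ x ∂(η n) with hEdef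
  set L : ℝ := ∏ p ∈ Finset.range n, S.lam p with hLdef
  have hQ1m : Measurable Q1 := S.gap_meas n _ measurable_const 0
  have hQφm : Measurable Qφ := S.gap_meas n φ hφ 0
  have hQ1pos : ∀ x, 0 < Q1 x := S.gap_one_pos n 0
  have hQ1ub : ∀ x, Q1 x ≤ (εp * (εp / εm)) ^ n := fun x => (S.gap_one_bdd n 0 x).2
  have hQ1lb : ∀ x, (εm * (εm / εp)) ^ n ≤ Q1 x := fun x => (S.gap_one_bdd n 0 x).1
  have hQφb : ∀ x, |Qφ x| ≤ b * (εp * (εp / εm)) ^ n := S.gap_abs_ub hφ hb n 0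
  have hLpos : 0 < L := Finset.prod_pos fun p _ => S.lam_pos p
  have hgap0 : ∀ {ψ : X → ℝ} {c : ℝ}, Measurable ψ → (∀ x, |ψ x| ≤ c) →
      ∫ x, QNgap G q η 0 n ψ x ∂(η 0) = L * ∫ y, ψ y ∂(η n) := by
    intro ψ c hψ hc
    rw [S.gap_eta hψ hc n 0]
    simp only [Nat.zero_add]
    rfl
  have hη0Q1 : ∫ x, Q1 x ∂(η 0) = L := by
    rw [hQ1, hgap0 measurable_const (c := 1) (fun _ => by norm_num)]
    norm_num
  have hE2 : ∫ x, Qφ x ∂(η 0) = L * E := hgap0 hφ hb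
  have hcontr := S.contract hφ hb n 0
  have hrb : ∀ x, |Qφ x / Q1 x| ≤ b := fun x => by
    rw [abs_div, abs_of_pos (hQ1pos x), div_le_iff₀ (hQ1pos x)]
    exact S.gap_abs_le hφ hb n 0 x
  have hrm : Measurable fun x => Qφ x / Q1 x := hQφm.div hQ1m
  have hQ1int : ∀ (μ : Measure X) [IsProbabilityMeasure μ], Integrable Q1 μ := by
    intro μ _
    exact intble2 hQ1m (fun x => (hQ1pos x).le) hQ1ub
  have hQφint : ∀ (μ : Measure X) [IsProbabilityMeasure μ], Integrable Qφ μ := by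
    intro μ _
    exact intble hQφm hQφb
  -- pointwise bound |r x - E| ≤ ρn
  have hrE : ∀ x, |Qφ x / Q1 x - E| ≤ ρn := by
    intro x
    have e : (fun y => Q1 y * (Qφ x / Q1 x - Qφ y / Q1 y))
        = fun y => (Qφ x / Q1 x) * Q1 y - Qφ y := by
      funext y
      rw [mul_sub]
      congr 1
      · ring
      · rw [mul_comm, div_mul_cancel₀ _ (hQ1pos y).ne']
    have h1 : ∫ y, Q1 y * (Qφ x / Q1 x - Qφ y / Q1 y) ∂(η 0)
        = (Qφ x / Q1 x) * L - L * E := by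
      rw [e, integral_sub ((hQ1int (η 0)).const_mul _) (hQφint (η 0)),
        integral_const_mul, hη0Q1, hE2]
    have int1 : Integrable (fun y => |Q1 y| * |Qφ x / Q1 x - Qφ y / Q1 y|) (η 0) := by
      apply intble2 (hQ1m.abs.mul ((measurable_const.sub hrm).abs)) (lo := 0)
        (hi := (εp * (εp / εm)) ^ n * (2 * b))
      · intro y; show 0 ≤ |Q1 y| * |Qφ x / Q1 x - Qφ y / Q1 y|; positivity
      · intro y
        show |Q1 y| * |Qφ x / Q1 x - Qφ y / Q1 y| ≤ _
        apply mul_le_mul _ _ (abs_nonneg _) (by positivity)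
        · rw [abs_of_pos (hQ1pos y)]; exact hQ1ub y
        · have hx := abs_le.1 (hrb x)
          have hy := abs_le.1 (hrb y)
          rw [abs_le]
          constructor <;> [linarith; linarith]
    have int2 : Integrable (fun y => Q1 y * ρn) (η 0) := (hQ1int (η 0)).mul_const _
    have h2 : |∫ y, Q1 y * (Qφ x / Q1 x - Qφ y / Q1 y) ∂(η 0)| ≤ ρn * L := by
      have ha : |∫ y, Q1 y * (Qφ x / Q1 x - Qφ y / Q1 y) ∂(η 0)|
          ≤ ∫ y, |Q1 y| * |Qφ x / Q1 x - Qφ y / Q1 y| ∂(η 0) := by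
        simpa [Real.norm_eq_abs, abs_mul] using
          norm_integral_le_integral_norm
            (fun y => Q1 y * (Qφ x / Q1 x - Qφ y / Q1 y)) (μ := η 0)
      refine le_trans ha ?_
      calc ∫ y, |Q1 y| * |Qφ x / Q1 x - Qφ y / Q1 y| ∂(η 0)
          ≤ ∫ y, Q1 y * ρn ∂(η 0) := by
            apply integral_mono int1 int2
            intro y
            show |Q1 y| * |Qφ x / Q1 x - Qφ y / Q1 y| ≤ Q1 y * ρn
            rw [abs_of_pos (hQ1pos y)]
            exact mul_le_mul_of_nonneg_left (hcontr x y) (hQ1pos y).le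
      _ = ρn * L := by rw [integral_mul_const, hη0Q1]; ring
    rw [h1] at h2
    have h4 := abs_le.1 h2
    rw [abs_le]
    constructor
    · have h5 : (-ρn) * L ≤ (Qφ x / Q1 x - E) * L := by nlinarith [h4.1]
      linarith [le_of_mul_le_mul_right h5 hLpos]
    · have h5 : (Qφ x / Q1 x - E) * L ≤ ρn * L := by nlinarith [h4.2]
      linarith [le_of_mul_le_mul_right h5 hLpos]
  -- key integrals over μ'
  set A : ℝ := ∫ x, Qφ x ∂μ' with hA
  set B : ℝ := ∫ x, Q1 x ∂μ' with hB
  have hBpos : 0 < B :=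
    lt_of_lt_of_le (pow_pos hcl n) (const_le_integral hQ1m hQ1lb hQ1ub)
  have hBub : B ≤ (εp / εm) * L := by
    apply integral_le_const hQ1m (lo := 0) (fun x => (hQ1pos x).le)
    exact fun x => S.gap_one_sharp n hn x
  have hABE : |A - B * E| ≤ ρn * B := by
    have e : (fun x => Q1 x * (Qφ x / Q1 x - E)) = fun x => Qφ x - E * Q1 x := by
      funext x
      rw [mul_sub]
      congr 1
      · rw [mul_comm, div_mul_cancel₀ _ (hQ1pos x).ne']
      · ring
    have h1 : ∫ x, Q1 x * (Qφ x / Q1 x - E) ∂μ' = A - B * E := by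
      rw [e, integral_sub (hQφint μ') ((hQ1int μ').const_mul _), integral_const_mul]
      ring
    rw [← h1]
    have int1 : Integrable (fun x => |Q1 x| * |Qφ x / Q1 x - E|) μ' := by
      apply intble2 (hQ1m.abs.mul ((hrm.sub measurable_const).abs)) (lo := 0)
        (hi := (εp * (εp / εm)) ^ n * ρn)
      · intro y; show 0 ≤ |Q1 y| * |Qφ y / Q1 y - E|; positivity
      · intro y
        show |Q1 y| * |Qφ y / Q1 y - E| ≤ _
        apply mul_le_mul _ (hrE y) (abs_nonneg _) (by positivity)
        rw [abs_of_pos (hQ1pos y)]; exact hQ1ub y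
    have int2 : Integrable (fun x => Q1 x * ρn) μ' := (hQ1int μ').mul_const _
    have ha : |∫ x, Q1 x * (Qφ x / Q1 x - E) ∂μ'|
        ≤ ∫ x, |Q1 x| * |Qφ x / Q1 x - E| ∂μ' := by
      simpa [Real.norm_eq_abs, abs_mul] using
        norm_integral_le_integral_norm (fun x => Q1 x * (Qφ x / Q1 x - E)) (μ := μ')
    refine le_trans ha ?_
    calc ∫ x, |Q1 x| * |Qφ x / Q1 x - E| ∂μ'
        ≤ ∫ x, Q1 x * ρn ∂μ' := by
          apply integral_mono int1 int2
          intro y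
          show |Q1 y| * |Qφ y / Q1 y - E| ≤ Q1 y * ρn
          rw [abs_of_pos (hQ1pos y)]
          exact mul_le_mul_of_nonneg_left (hrE y) (hQ1pos y).le
    _ = ρn * B := by rw [integral_mul_const]; ring
  constructor
  · -- part (i)
    rw [hη0Q1]
    have hdiv : ∫ x, Q1 x / L ∂μ' = B / L := by rw [integral_div]
    rw [hdiv]
    have heq : L⁻¹ * A - B / L * E = (A - B * E) / L := by field_simp
    rw [heq, abs_div, abs_of_pos hLpos, div_le_iff₀ hLpos]
    have h6 : ρn * B ≤ ρn * ((εp / εm) * L) := mul_le_mul_of_nonneg_left hBub hρn0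
    calc |A - B * E| ≤ ρn * B := hABE
    _ ≤ ρn * ((εp / εm) * L) := h6
    _ = ρn * (εp / εm) * L := by ring
  · -- part (ii)
    have heq : A / B - E = (A - B * E) / B := by field_simp
    rw [heq, abs_div, abs_of_pos hBpos, div_le_iff₀ hBpos]
    have h7 : (1 : ℝ) ≤ (εp / εm) ^ 2 := by
      have : (1 : ℝ) ≤ εp / εm := (one_le_div hm).2 S.hεle
      nlinarith
    calc |A - B * E| ≤ ρn * B := hABE
    _ = ρn * B * 1 := (mul_one _).symm
    _ ≤ ρn * B * (εp / εm) ^ 2 :=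
        mul_le_mul_of_nonneg_left h7 (mul_nonneg hρn0 hBpos.le)
    _ = ρn * (εp / εm) ^ 2 * B := by ring

end Nice

theorem stmt16 {X : Type*} [MeasurableSpace X]
    (G : X → ℝ) (M : Kernel X X) [IsMarkovKernel M]
    (ν : Measure X) [IsProbabilityMeasure ν]
    (q : X → X → ℝ) (εm εp : ℝ)
    (hq_meas : Measurable fun p : X × X => q p.1 p.2)
    (hεm_pos : 0 < εm) (hεle : εm ≤ εp)
    (hq_lb : ∀ x y, εm ≤ q x y) (hq_ub : ∀ x y, q x y ≤ εp)
    (hG_meas : Measurable G) (hG_pos : ∀ x, 0 < G x) (hG_bdd : ∃ c, ∀ x, G x ≤ c)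
    (hH : ∀ x (A : Set X), MeasurableSet A →
      ENNReal.ofReal (G x) * M x A = ∫⁻ y in A, ENNReal.ofReal (q x y) ∂ν)
    (η : ℕ → Measure X) (hη : ∀ p, IsProbabilityMeasure (η p))
    (μ' : Measure X) [IsProbabilityMeasure μ']
    (φ : X → ℝ) (hφ_meas : Measurable φ) (b : ℝ) (hφ_b : ∀ x, |φ x| ≤ b)
    (n : ℕ) (hn : 1 ≤ n) :
    -- (i) path-wise multiplicative ergodic bound
    |(∏ p ∈ Finset.range n, ∫ y, G y ∂(η p))⁻¹ * ∫ x, QNgap G q η 0 n φ x ∂μ'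
        - (∫ x, (QNgap G q η 0 n (fun _ => (1 : ℝ)) x /
            ∫ w, QNgap G q η 0 n (fun _ => (1 : ℝ)) w ∂(η 0)) ∂μ') * ∫ x, φ x ∂(η n)|
      ≤ 2 * b * (1 - (εm / εp) ^ 2) ^ n * (εp / εm) ∧
    -- (ii) path-wise stability of the normalized semigroup
    |(∫ x, QNgap G q η 0 n φ x ∂μ') / (∫ x, QNgap G q η 0 n (fun _ => (1 : ℝ)) x ∂μ')
        - ∫ x, φ x ∂(η n)|
      ≤ 2 * b * (1 - (εm / εp) ^ 2) ^ n * (εp / εm) ^ 2 := by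
  have hbase : ∀ x, ENNReal.ofReal (G x) = ∫⁻ y, ENNReal.ofReal (q x y) ∂ν := by
    intro x
    have h := hH x Set.univ MeasurableSet.univ
    rw [measure_univ, mul_one, Measure.restrict_univ] at h
    exact h
  have hG_lb : ∀ x, εm ≤ G x := by
    intro x
    have hge : ENNReal.ofReal εm ≤ ENNReal.ofReal (G x) := by
      rw [hbase x]
      calc ENNReal.ofReal εm = ∫⁻ _, ENNReal.ofReal εm ∂ν := by simp
      _ ≤ ∫⁻ y, ENNReal.ofReal (q x y) ∂ν :=
        lintegral_mono fun y => ENNReal.ofReal_le_ofReal (hq_lb x y)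
    exact (ENNReal.ofReal_le_ofReal_iff (hG_pos x).le).1 hge
  have hG_ub : ∀ x, G x ≤ εp := by
    intro x
    have hle : ENNReal.ofReal (G x) ≤ ENNReal.ofReal εp := by
      rw [hbase x]
      calc ∫⁻ y, ENNReal.ofReal (q x y) ∂ν
          ≤ ∫⁻ _, ENNReal.ofReal εp ∂ν :=
            lintegral_mono fun y => ENNReal.ofReal_le_ofReal (hq_ub x y)
      _ = ENNReal.ofReal εp := by simp
    exact (ENNReal.ofReal_le_ofReal_iff (le_trans hεm_pos.le hεle)).1 hle
  exact Nice.main ⟨hq_meas, hεm_pos, hεle, hq_lb, hq_ub, hG_meas, hG_lb, hG_ub, hη⟩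
    μ' hφ_meas hφ_b n hn
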